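/- arXiv:1909.04260 — 3 statements merged into one kernel-verified Lean document; each statement's English description precedes it below -/
import Mathlib

section
/- Let (a,b) be a matching pair in L^∞(ℝ) with subordinated pair (c,d). Suppose there exist bounded operators C_r and D_r on L²(ℝ⁺) with W(c)∘C_r = I and W(d)∘D_r = I (i.e. W(c) and W(d) are right invertible). Then the Wiener–Hopf plus Hankel operator W(a)+H(b) is right invertible; more precisely, setting A := C_r ∘ W(ã⁻¹) ∘ D_r, the operator B := (I − H(c̃))∘A + H(a⁻¹)∘D_r satisfies (W(a)+H(b))∘B = I. -/
open MeasureTheory Complex Filter Set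

noncomputable section

namespace WienerHopf

/-- The space `L²(ℝ;ℂ)`. -/
abbrev L2 : Type := Lp ℂ 2 (volume : Measure ℝ)

open Classical in
/-- Multiplication by a function `a : ℝ → ℂ`, as a bounded operator on `L²(ℝ)`.
(It is defined to be `0` in the degenerate case where `a` is not essentially bounded.) -/
def mul (a : ℝ → ℂ) : L2 →L[ℂ] L2 :=
  if h : MemLp a ⊤ (volume : Measure ℝ) then
    LinearMap.mkContinuous
      { toFun := fun f => ((Lp.memLp f).smul (r := 2) h).toLp (a • (f : ℝ → ℂ))
        map_add' := by
          intro f g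
          rw [← MemLp.toLp_add]
          apply Lp.ext
          filter_upwards [MemLp.coeFn_toLp ((Lp.memLp (f + g)).smul (r := 2) h),
            MemLp.coeFn_toLp (((Lp.memLp f).smul (r := 2) h).add
              ((Lp.memLp g).smul (r := 2) h)),
            Lp.coeFn_add f g] with t h1 h2 h3
          rw [h1, h2]
          simp only [Pi.smul_apply, smul_eq_mul, Pi.mul_apply, Pi.add_apply]
          rw [h3]
          simp [Pi.add_apply, mul_add]
        map_smul' := by
          intro m f
          simp only [RingHom.id_apply]
          rw [← MemLp.toLp_const_smul]
          apply Lp.ext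
          filter_upwards [MemLp.coeFn_toLp ((Lp.memLp (m • f)).smul (r := 2) h),
            MemLp.coeFn_toLp (((Lp.memLp f).smul (r := 2) h).const_smul m),
            Lp.coeFn_smul m f] with t h1 h2 h3
          rw [h1, h2]
          simp only [Pi.smul_apply, smul_eq_mul, Pi.mul_apply]
          rw [h3]
          simp only [Pi.smul_apply, smul_eq_mul]
          ring
        }
      (eLpNorm a ⊤ (volume : Measure ℝ)).toReal
      (by
        intro f
        simp only [LinearMap.coe_mk, AddHom.coe_mk]
        rw [Lp.norm_toLp, Lp.norm_def]
        have hle := eLpNorm_smul_le_mul_eLpNorm (Lp.aestronglyMeasurable f) h.1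
          (p := ⊤) (q := 2) (r := 2)
        calc (eLpNorm (a • (f : ℝ → ℂ)) 2 (volume : Measure ℝ)).toReal
            ≤ (eLpNorm a ⊤ (volume : Measure ℝ) * eLpNorm (f : ℝ → ℂ) 2 volume).toReal := by
              apply ENNReal.toReal_mono _ hle
              exact ENNReal.mul_ne_top h.2.ne (Lp.eLpNorm_lt_top f).ne
          _ = (eLpNorm a ⊤ (volume : Measure ℝ)).toReal *
              (eLpNorm (f : ℝ → ℂ) 2 (volume : Measure ℝ)).toReal := ENNReal.toReal_mul)
  else 0

theorem mul_coeFn {a : ℝ → ℂ} (h : MemLp a ⊤ (volume : Measure ℝ)) (f : L2) :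
    (mul a f : ℝ → ℂ) =ᵐ[volume] fun t => a t * f t := by
  rw [mul, dif_pos h]
  show ⇑(((Lp.memLp f).smul (r := 2) h).toLp (a • (f : ℝ → ℂ))) =ᵐ[volume]
    fun t => a t * f t
  exact (MemLp.coeFn_toLp _).trans
    (Eventually.of_forall fun t => by simp [Pi.smul_apply])

/-- `(-t)`-reflection is measure preserving. -/
theorem negMP : MeasurePreserving (fun t : ℝ => -t) volume volume :=
  Measure.measurePreserving_neg (volume : Measure ℝ)

/-- The reflection operator `(Jφ)(t) = φ(-t)` on `L²(ℝ)`. -/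
def reflect : L2 →L[ℂ] L2 :=
  LinearMap.mkContinuous
    { toFun := ⇑(Lp.compMeasurePreserving (fun t : ℝ => -t) negMP)
      map_add' := fun f g => map_add _ f g
      map_smul' := by
        intro m g
        simp only [RingHom.id_apply]
        apply Lp.ext
        filter_upwards [Lp.coeFn_compMeasurePreserving (f := fun t : ℝ => -t) (m • g) negMP,
          Lp.coeFn_smul m (Lp.compMeasurePreserving (fun t : ℝ => -t) negMP g),
          Lp.coeFn_compMeasurePreserving (f := fun t : ℝ => -t) g negMP,
          negMP.quasiMeasurePreserving.ae_eq_comp (Lp.coeFn_smul m g)] with t h1 h2 h3 h4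
        rw [h1, h2, h4]
        simp only [Function.comp_apply, Pi.smul_apply, smul_eq_mul]
        rw [h3]
        simp only [Function.comp_apply]
      }
    1
    (by
      intro g
      rw [one_mul]
      exact le_of_eq (Lp.norm_compMeasurePreserving g _))

theorem reflect_coeFn (g : L2) :
    (reflect g : ℝ → ℂ) =ᵐ[volume] fun t => g (-t) :=
  Lp.coeFn_compMeasurePreserving (f := fun t : ℝ => -t) g negMP

/-- The indicator function of `(0,∞)`. -/
def chiPlus : ℝ → ℂ := Set.indicator (Set.Ioi (0 : ℝ)) (fun _ => 1)

theorem chiPlus_memℒp : MemLp chiPlus ⊤ (volume : Measure ℝ) :=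
  (memLp_top_const (1 : ℂ)).indicator measurableSet_Ioi

/-- The subspace of `L²(ℝ)` consisting of functions vanishing a.e. on `(-∞,0)`;
it is identified with `L²(ℝ⁺)`. -/
def posSubspace : Submodule ℂ L2 where
  carrier := {f : L2 | ∀ᵐ t : ℝ ∂volume, t < 0 → (f : ℝ → ℂ) t = 0}
  zero_mem' := by
    filter_upwards [Lp.coeFn_zero ℂ 2 (volume : Measure ℝ)] with t ht _
    simp [ht]
  add_mem' := by
    intro f g hf hg
    filter_upwards [hf, hg, Lp.coeFn_add f g] with t h1 h2 h3 hlt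
    rw [h3]
    simp [Pi.add_apply, h1 hlt, h2 hlt]
  smul_mem' := by
    intro m f hf
    filter_upwards [hf, Lp.coeFn_smul m f] with t h1 h2 hlt
    rw [h2]
    simp [Pi.smul_apply, h1 hlt]

/-- `L²(ℝ⁺)`, realized as the subspace of `L²(ℝ)` of functions vanishing a.e. on `(-∞,0)`. -/
abbrev Lp2Plus : Type := ↥posSubspace

theorem chiPlus_mul_mem (g : L2) : mul chiPlus g ∈ posSubspace := by
  filter_upwards [mul_coeFn chiPlus_memℒp g] with t ht hlt
  rw [ht, chiPlus, Set.indicator_of_notMem (by simpa using hlt.le), zero_mul]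

/-- Compression of an operator on `L²(ℝ)` to the subspace `L²(ℝ⁺)`:
`φ ↦ χ₊ ⬝ (T φ)`. -/
def compress (T : L2 →L[ℂ] L2) : Lp2Plus →L[ℂ] Lp2Plus :=
  LinearMap.mkContinuous
    { toFun := fun φ => ⟨mul chiPlus (T φ.val), chiPlus_mul_mem _⟩
      map_add' := by intro φ ψ; apply Subtype.ext; simp
      map_smul' := by intro m φ; apply Subtype.ext; simp }
    ‖(mul chiPlus).comp T‖
    (by intro φ; exact ((mul chiPlus).comp T).le_opNorm φ.val)

theorem compress_coe (T : L2 →L[ℂ] L2) (φ : Lp2Plus) :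
    (compress T φ : L2) = mul chiPlus (T φ.val) := rfl

/-- An abstract realization of the Fourier transform
`(𝓕φ)(ξ) = ∫ e^{iξx} φ(x) dx` on `L²(ℝ)` (together with its inverse
`(𝓕⁻¹ψ)(x) = (2π)⁻¹ ∫ e^{-iξx} ψ(ξ) dξ`): a continuous linear bijection of `L²(ℝ)`
that is given by the above integral formulas on integrable functions.  By density
of `L¹ ∩ L²` in `L²`, these properties determine the operator uniquely, and by the
Fourier–Plancherel theory such an operator exists. -/
structure FourierL2 where
  equiv : L2 ≃L[ℂ] L2
  forward : ∀ φ : L2, Integrable (φ : ℝ → ℂ) volume →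
      (equiv φ : ℝ → ℂ) =ᵐ[volume]
        fun ξ : ℝ => ∫ x : ℝ, Complex.exp (Complex.I * ξ * x) * φ x
  inverse : ∀ ψ : L2, Integrable (ψ : ℝ → ℂ) volume →
      (equiv.symm ψ : ℝ → ℂ) =ᵐ[volume]
        fun x : ℝ => (2 * Real.pi : ℂ)⁻¹ * ∫ ξ : ℝ, Complex.exp (-(Complex.I * ξ * x)) * ψ ξ

/-- `W⁰(a) = 𝓕⁻¹ M_a 𝓕`, the convolution (Fourier multiplier) operator on `L²(ℝ)`. -/
def W0 (F : FourierL2) (a : ℝ → ℂ) : L2 →L[ℂ] L2 :=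
  (F.equiv.symm : L2 →L[ℂ] L2).comp ((mul a).comp (F.equiv : L2 →L[ℂ] L2))

/-- The Wiener–Hopf operator `W(a) = χ₊ W⁰(a)` on `L²(ℝ⁺)`. -/
def W (F : FourierL2) (a : ℝ → ℂ) : Lp2Plus →L[ℂ] Lp2Plus :=
  compress (W0 F a)

/-- The Hankel operator `H(b) = χ₊ W⁰(b) J` on `L²(ℝ⁺)`. -/
def H (F : FourierL2) (b : ℝ → ℂ) : Lp2Plus →L[ℂ] Lp2Plus :=
  compress ((W0 F b).comp reflect)

/-- `a` is invertible in the Banach algebra `L^∞(ℝ)`: `a ∈ L^∞`, `a ≠ 0` a.e.,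
and the pointwise inverse `a⁻¹` again belongs to `L^∞`. -/
def InvertibleLinf (a : ℝ → ℂ) : Prop :=
  MemLp a ⊤ (volume : Measure ℝ) ∧ (∀ᵐ t : ℝ ∂volume, a t ≠ 0) ∧
    MemLp (fun t => (a t)⁻¹) ⊤ (volume : Measure ℝ)

/-- `(a,b)` is a matching pair: `a, b` are invertible in `L^∞(ℝ)` and
`a(t)a(-t) = b(t)b(-t)` for a.e. `t`. -/
def MatchingPair (a b : ℝ → ℂ) : Prop :=
  InvertibleLinf a ∧ InvertibleLinf b ∧
    ∀ᵐ t : ℝ ∂volume, a t * a (-t) = b t * b (-t)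


/-! ### Auxiliary lemmas -/

theorem aux_ae_ne_zero : ∀ᵐ t : ℝ ∂volume, t ≠ 0 := by
  rw [ae_iff]
  simp only [not_not, Set.setOf_eq_eq_singleton]
  exact measure_singleton 0

theorem aux_ae_neg {p : ℝ → Prop} (h : ∀ᵐ t : ℝ ∂volume, p t) :
    ∀ᵐ t : ℝ ∂volume, p (-t) :=
  negMP.quasiMeasurePreserving.ae h

theorem aux_memℒp_mul {u v : ℝ → ℂ} (hu : MemLp u ⊤ (volume : Measure ℝ))
    (hv : MemLp v ⊤ (volume : Measure ℝ)) :
    MemLp (fun t => u t * v t) ⊤ (volume : Measure ℝ) := by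
  have h := hv.smul (φ := u) hu (r := ⊤)
  exact h.ae_eq (Eventually.of_forall fun t => by simp [Pi.smul_apply, smul_eq_mul])

theorem aux_memℒp_reflect {u : ℝ → ℂ} (hu : MemLp u ⊤ (volume : Measure ℝ)) :
    MemLp (fun t => u (-t)) ⊤ (volume : Measure ℝ) :=
  hu.comp_measurePreserving negMP

theorem aux_mul_comp {u v : ℝ → ℂ} (hu : MemLp u ⊤ (volume : Measure ℝ))
    (hv : MemLp v ⊤ (volume : Measure ℝ)) :
    (mul u).comp (mul v) = mul (fun t => u t * v t) := by
  have huv : MemLp (fun t => u t * v t) ⊤ (volume : Measure ℝ) := aux_memℒp_mul hu hv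
  refine ContinuousLinearMap.ext fun f => Lp.ext ?_
  simp only [ContinuousLinearMap.comp_apply]
  filter_upwards [mul_coeFn hu (mul v f), mul_coeFn hv f, mul_coeFn huv f] with t h1 h2 h3
  rw [h1, h2, h3, mul_assoc]

theorem aux_mul_congr {u v : ℝ → ℂ} (hu : MemLp u ⊤ (volume : Measure ℝ))
    (h : u =ᵐ[volume] v) : mul u = mul v := by
  have hv : MemLp v ⊤ (volume : Measure ℝ) := hu.ae_eq h
  refine ContinuousLinearMap.ext fun f => Lp.ext ?_
  filter_upwards [mul_coeFn hu f, mul_coeFn hv f, h] with t h1 h2 h3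
  rw [h1, h2, h3]

theorem aux_mul_one : mul (fun _ : ℝ => (1 : ℂ)) = ContinuousLinearMap.id ℂ L2 := by
  refine ContinuousLinearMap.ext fun f => Lp.ext ?_
  filter_upwards [mul_coeFn (memLp_top_const (1 : ℂ)) f] with t h1
  rw [h1, one_mul]
  rfl

theorem aux_mul_add {u v : ℝ → ℂ} (hu : MemLp u ⊤ (volume : Measure ℝ))
    (hv : MemLp v ⊤ (volume : Measure ℝ)) :
    mul u + mul v = mul (fun t => u t + v t) := by
  have hs : MemLp (fun t => u t + v t) ⊤ (volume : Measure ℝ) := hu.add hv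
  refine ContinuousLinearMap.ext fun f => Lp.ext ?_
  simp only [ContinuousLinearMap.add_apply]
  filter_upwards [Lp.coeFn_add (mul u f) (mul v f), mul_coeFn hu f, mul_coeFn hv f,
    mul_coeFn hs f] with t h0 h1 h2 h3
  rw [h0, Pi.add_apply, h1, h2, h3, add_mul]

theorem aux_reflect_reflect : reflect.comp reflect = ContinuousLinearMap.id ℂ L2 := by
  refine ContinuousLinearMap.ext fun f => Lp.ext ?_
  simp only [ContinuousLinearMap.comp_apply]
  filter_upwards [reflect_coeFn (reflect f), aux_ae_neg (reflect_coeFn f)] with t h1 h2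
  rw [h1, h2, neg_neg]
  rfl

theorem aux_reflect_reflect_apply (f : L2) : reflect (reflect f) = f :=
  DFunLike.congr_fun aux_reflect_reflect f

theorem aux_reflect_mul {u : ℝ → ℂ} (hu : MemLp u ⊤ (volume : Measure ℝ)) :
    reflect.comp ((mul u).comp reflect) = mul (fun t => u (-t)) := by
  refine ContinuousLinearMap.ext fun f => Lp.ext ?_
  simp only [ContinuousLinearMap.comp_apply]
  filter_upwards [reflect_coeFn (mul u (reflect f)), aux_ae_neg (mul_coeFn hu (reflect f)),
    aux_ae_neg (reflect_coeFn f), mul_coeFn (aux_memℒp_reflect hu) f] with t h1 h2 h3 h4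
  rw [h1, h2, h3, h4, neg_neg]

theorem aux_integrable_simpleFunc (s : Lp.simpleFunc ℂ 2 (volume : Measure ℝ)) :
    Integrable ((s : L2) : ℝ → ℂ) volume := by
  have h1 := Lp.simpleFunc.toSimpleFunc_eq_toFun s
  have h2 : MemLp (Lp.simpleFunc.toSimpleFunc s) 2 (volume : Measure ℝ) :=
    (Lp.memLp (s : L2)).ae_eq h1.symm
  have h3 : Integrable (Lp.simpleFunc.toSimpleFunc s) volume := by
    rw [SimpleFunc.integrable_iff]
    exact (SimpleFunc.memLp_iff (by norm_num) (by norm_num)).mp h2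
  exact h3.congr h1

theorem aux_fourier_reflect_apply (F : FourierL2) (ψ : L2)
    (hint : Integrable (ψ : ℝ → ℂ) volume) :
    F.equiv (reflect ψ) = reflect (F.equiv ψ) := by
  have hemb : MeasurableEmbedding (fun t : ℝ => -t) :=
    (Homeomorph.neg ℝ).isClosedEmbedding.measurableEmbedding
  have hrint : Integrable ((reflect ψ : L2) : ℝ → ℂ) volume :=
    Integrable.congr ((negMP.integrable_comp_emb hemb).mpr hint) (reflect_coeFn ψ).symm
  apply Lp.ext
  filter_upwards [F.forward (reflect ψ) hrint, reflect_coeFn (F.equiv ψ),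
    aux_ae_neg (F.forward ψ hint)] with ξ h1 h2 h3
  simp only [h1, h2, h3]
  have hint1 : ∫ x : ℝ, Complex.exp (Complex.I * ξ * x) * (reflect ψ : ℝ → ℂ) x
      = ∫ x : ℝ, Complex.exp (Complex.I * ξ * x) * (ψ : ℝ → ℂ) (-x) :=
    integral_congr_ae ((reflect_coeFn ψ).mono fun x hx => by simp only [hx])
  rw [hint1]
  have hfun : (fun x : ℝ => Complex.exp (Complex.I * ξ * x) * (ψ : ℝ → ℂ) (-x))
      = fun x : ℝ =>
        (fun y : ℝ => Complex.exp (Complex.I * ((-ξ : ℝ) : ℂ) * y) * (ψ : ℝ → ℂ) y) (-x) := by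
    funext x
    simp only [Complex.ofReal_neg, neg_mul, mul_neg, neg_neg]
  rw [hfun]
  exact negMP.integral_comp hemb
    (fun y : ℝ => Complex.exp (Complex.I * ((-ξ : ℝ) : ℂ) * y) * (ψ : ℝ → ℂ) y)

theorem aux_fourier_reflect (F : FourierL2) :
    ((F.equiv : L2 →L[ℂ] L2)).comp reflect = reflect.comp (F.equiv : L2 →L[ℂ] L2) := by
  have hd : Dense (Set.range (Subtype.val : Lp.simpleFunc ℂ 2 (volume : Measure ℝ) → L2)) :=
    Lp.simpleFunc.denseRange (by norm_num)
  have heq : Set.EqOn ⇑(((F.equiv : L2 →L[ℂ] L2)).comp reflect)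
      ⇑(reflect.comp (F.equiv : L2 →L[ℂ] L2))
      (Set.range (Subtype.val : Lp.simpleFunc ℂ 2 (volume : Measure ℝ) → L2)) := by
    rintro g ⟨s, rfl⟩
    show F.equiv (reflect (s : L2)) = reflect (F.equiv (s : L2))
    exact aux_fourier_reflect_apply F (s : L2) (aux_integrable_simpleFunc s)
  have h := Continuous.ext_on hd (((F.equiv : L2 →L[ℂ] L2)).comp reflect).continuous
    (reflect.comp (F.equiv : L2 →L[ℂ] L2)).continuous heq
  refine ContinuousLinearMap.ext fun f => ?_
  exact congrFun h f

theorem aux_W0_comp (F : FourierL2) {u v : ℝ → ℂ} (hu : MemLp u ⊤ (volume : Measure ℝ))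
    (hv : MemLp v ⊤ (volume : Measure ℝ)) :
    (W0 F u).comp (W0 F v) = W0 F (fun t => u t * v t) := by
  have hm : (mul u).comp (mul v) = mul (fun t => u t * v t) := aux_mul_comp hu hv
  refine ContinuousLinearMap.ext fun f => ?_
  simp only [W0, ContinuousLinearMap.comp_apply, ContinuousLinearEquiv.coe_coe,
    ContinuousLinearEquiv.apply_symm_apply]
  congr 1
  exact DFunLike.congr_fun hm (F.equiv f)

theorem aux_W0_one (F : FourierL2) : W0 F (fun _ : ℝ => (1 : ℂ)) = ContinuousLinearMap.id ℂ L2 := by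
  refine ContinuousLinearMap.ext fun f => ?_
  simp only [W0, ContinuousLinearMap.comp_apply, ContinuousLinearEquiv.coe_coe]
  rw [aux_mul_one]
  simp

theorem aux_W0_reflect (F : FourierL2) {u : ℝ → ℂ} (hu : MemLp u ⊤ (volume : Measure ℝ)) :
    reflect.comp ((W0 F u).comp reflect) = W0 F (fun t => u (-t)) := by
  have hJ : ∀ g : L2, F.equiv (reflect g) = reflect (F.equiv g) := by
    intro g
    have := DFunLike.congr_fun (aux_fourier_reflect F) g
    simpa using this
  have hJs : ∀ g : L2, reflect (F.equiv.symm g) = F.equiv.symm (reflect g) := by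
    intro g
    apply F.equiv.injective
    rw [hJ, F.equiv.apply_symm_apply, F.equiv.apply_symm_apply]
  refine ContinuousLinearMap.ext fun f => ?_
  simp only [W0, ContinuousLinearMap.comp_apply, ContinuousLinearEquiv.coe_coe]
  rw [hJ f, hJs]
  congr 1
  exact DFunLike.congr_fun (aux_reflect_mul hu) (F.equiv f)

theorem chiPlus_mul_val (φ : Lp2Plus) : mul chiPlus (φ : L2) = (φ : L2) := by
  apply Lp.ext
  filter_upwards [mul_coeFn chiPlus_memℒp (φ : L2), φ.2, aux_ae_ne_zero] with t h1 h2 h3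
  rw [h1]
  rcases h3.lt_or_gt with h | h
  · rw [h2 h, mul_zero]
  · rw [show chiPlus t = 1 from Set.indicator_of_mem (Set.mem_Ioi.mpr h) _, one_mul]

theorem chiPlus_mul_reflect_val (φ : Lp2Plus) : mul chiPlus (reflect (φ : L2)) = 0 := by
  apply Lp.ext
  filter_upwards [mul_coeFn chiPlus_memℒp (reflect (φ : L2)), reflect_coeFn (φ : L2),
    aux_ae_neg φ.2, Lp.coeFn_zero ℂ 2 (volume : Measure ℝ)] with t h1 h2 h3 h4
  rw [h1, h4, Pi.zero_apply]
  rcases le_or_gt t 0 with h | h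
  · rw [show chiPlus t = 0 from Set.indicator_of_notMem (by simpa using h) _, zero_mul]
  · rw [h2, h3 (by linarith), mul_zero]

theorem P0_bracket (z : L2) : mul chiPlus z + reflect (mul chiPlus (reflect z)) = z := by
  have h1 : reflect.comp ((mul chiPlus).comp reflect) = mul (fun t => chiPlus (-t)) :=
    aux_reflect_mul chiPlus_memℒp
  have hsum : mul chiPlus + mul (fun t => chiPlus (-t))
      = mul (fun t => chiPlus t + chiPlus (-t)) :=
    aux_mul_add chiPlus_memℒp (aux_memℒp_reflect chiPlus_memℒp)
  have hone : mul (fun t => chiPlus t + chiPlus (-t)) = mul (fun _ : ℝ => (1 : ℂ)) := by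
    apply aux_mul_congr (chiPlus_memℒp.add (aux_memℒp_reflect chiPlus_memℒp))
    filter_upwards [aux_ae_ne_zero] with t ht
    show chiPlus t + chiPlus (-t) = 1
    rcases ht.lt_or_gt with h | h
    · rw [show chiPlus t = 0 from Set.indicator_of_notMem (by simp only [Set.mem_Ioi, not_lt]; linarith) _,
        show chiPlus (-t) = 1 from Set.indicator_of_mem (Set.mem_Ioi.mpr (by linarith)) _]
      ring
    · rw [show chiPlus t = 1 from Set.indicator_of_mem (Set.mem_Ioi.mpr h) _,
        show chiPlus (-t) = 0 from Set.indicator_of_notMem (by simp only [Set.mem_Ioi, not_lt]; linarith) _]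
      ring
  calc mul chiPlus z + reflect (mul chiPlus (reflect z))
      = mul chiPlus z + (reflect.comp ((mul chiPlus).comp reflect)) z := rfl
    _ = mul chiPlus z + mul (fun t => chiPlus (-t)) z := by rw [h1]
    _ = (mul chiPlus + mul (fun t => chiPlus (-t))) z := rfl
    _ = z := by rw [hsum, hone, aux_mul_one]; rfl

theorem aux_key1 (F : FourierL2) {u v : ℝ → ℂ} (hu : MemLp u ⊤ (volume : Measure ℝ))
    (hv : MemLp v ⊤ (volume : Measure ℝ)) :
    W F (fun t => u t * v t)
      = (W F u).comp (W F v) + (H F u).comp (H F (fun t => v (-t))) := by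
  refine ContinuousLinearMap.ext fun φ => Subtype.ext ?_
  have h2 : W0 F (fun t => v (-t)) (reflect (φ : L2)) = reflect (W0 F v (φ : L2)) := by
    have h := DFunLike.congr_fun (aux_W0_reflect F hv) (reflect (φ : L2))
    simp only [ContinuousLinearMap.comp_apply] at h
    rw [aux_reflect_reflect_apply] at h
    exact h.symm
  have hcomp : W0 F u (W0 F v (φ : L2)) = W0 F (fun t => u t * v t) (φ : L2) := by
    have h := DFunLike.congr_fun (aux_W0_comp F hu hv) (φ : L2)
    simpa using h
  simp only [ContinuousLinearMap.add_apply, ContinuousLinearMap.comp_apply, Submodule.coe_add,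
    W, H, compress_coe]
  rw [h2, ← map_add, ← map_add, P0_bracket, hcomp]

theorem aux_key2 (F : FourierL2) {u v : ℝ → ℂ} (hu : MemLp u ⊤ (volume : Measure ℝ))
    (hv : MemLp v ⊤ (volume : Measure ℝ)) :
    H F (fun t => u t * v t)
      = (W F u).comp (H F v) + (H F u).comp (W F (fun t => v (-t))) := by
  refine ContinuousLinearMap.ext fun φ => Subtype.ext ?_
  have h2 : W0 F (fun t => v (-t)) (φ : L2) = reflect (W0 F v (reflect (φ : L2))) := by
    have h := DFunLike.congr_fun (aux_W0_reflect F hv) (φ : L2)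
    simp only [ContinuousLinearMap.comp_apply] at h
    exact h.symm
  have hcomp : W0 F u (W0 F v (reflect (φ : L2)))
      = W0 F (fun t => u t * v t) (reflect (φ : L2)) := by
    have h := DFunLike.congr_fun (aux_W0_comp F hu hv) (reflect (φ : L2))
    simpa using h
  simp only [ContinuousLinearMap.add_apply, ContinuousLinearMap.comp_apply, Submodule.coe_add,
    W, H, compress_coe]
  rw [h2, ← map_add, ← map_add, P0_bracket, hcomp]

theorem aux_W_congr (F : FourierL2) {u v : ℝ → ℂ} (hu : MemLp u ⊤ (volume : Measure ℝ))
    (h : u =ᵐ[volume] v) : W F u = W F v := by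
  have hm : mul u = mul v := aux_mul_congr hu h
  unfold W W0
  rw [hm]

theorem aux_H_congr (F : FourierL2) {u v : ℝ → ℂ} (hu : MemLp u ⊤ (volume : Measure ℝ))
    (h : u =ᵐ[volume] v) : H F u = H F v := by
  have hm : mul u = mul v := aux_mul_congr hu h
  unfold H W0
  rw [hm]

theorem aux_H_one (F : FourierL2) : H F (fun _ : ℝ => (1 : ℂ)) = 0 := by
  refine ContinuousLinearMap.ext fun φ => Subtype.ext ?_
  simp only [H, compress_coe, ContinuousLinearMap.comp_apply, ContinuousLinearMap.zero_apply,
    ZeroMemClass.coe_zero]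
  rw [aux_W0_one]
  simpa using chiPlus_mul_reflect_val φ

theorem aux_ring {R : Type*} [Ring R] (Wa Wb Wc Wd Ha Hb Hc' Hai Wrai Cr Dr : R)
    (e1 : Hb = Wa * Hc' + Ha * Wc)
    (e2 : Wa = Wb * Wc + Hb * Hc')
    (e3 : Wd = Wb * Wrai + Hb * Hai)
    (e4 : (0 : R) = Wa * Hai + Ha * Wrai)
    (hcr : Wc * Cr = 1) (hdr : Wd * Dr = 1) :
    (Wa + Hb) * ((1 - Hc') * (Cr * (Wrai * Dr)) + Hai * Dr) = 1 := by
  have e1' : Wa * Hc' = Hb - Ha * Wc := by rw [e1]; noncomm_ring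
  have e2' : Hb * Hc' = Wa - Wb * Wc := by rw [e2]; noncomm_ring
  have h5 : (Wa + Hb) * (1 - Hc') = (Ha + Wb) * Wc := by
    have expand : (Wa + Hb) * (1 - Hc') = Wa + Hb - Wa * Hc' - Hb * Hc' := by noncomm_ring
    rw [expand, e1', e2']
    noncomm_ring
  calc (Wa + Hb) * ((1 - Hc') * (Cr * (Wrai * Dr)) + Hai * Dr)
      = ((Wa + Hb) * (1 - Hc')) * (Cr * (Wrai * Dr)) + (Wa + Hb) * (Hai * Dr) := by noncomm_ring
    _ = ((Ha + Wb) * Wc) * (Cr * (Wrai * Dr)) + (Wa + Hb) * (Hai * Dr) := by rw [h5]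
    _ = (Ha + Wb) * ((Wc * Cr) * (Wrai * Dr)) + (Wa + Hb) * (Hai * Dr) := by noncomm_ring
    _ = (Wb * Wrai + Hb * Hai) * Dr + (Wa * Hai + Ha * Wrai) * Dr := by rw [hcr]; noncomm_ring
    _ = Wd * Dr + (0 : R) * Dr := by rw [← e3, ← e4]
    _ = 1 := by rw [zero_mul, add_zero, hdr]

/-- If `(a,b)` is a matching pair with subordinated pair `(c,d)` and the Wiener-Hopf
operators `W(c)`, `W(d)` are right invertible, then `W(a)+H(b)` is right invertible,
with right inverse `B = (I - H(c̃)) A + H(a⁻¹) Dᵣ`, `A = Cᵣ W(ã⁻¹) Dᵣ`. -/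
theorem rightInvertible_of_matching
    (F : FourierL2) (a b c d : ℝ → ℂ) (hab : MatchingPair a b)
    (hc : c = fun t => a t * (b t)⁻¹) (hd : d = fun t => a t * (b (-t))⁻¹)
    (Cr Dr : Lp2Plus →L[ℂ] Lp2Plus)
    (hCr : (W F c).comp Cr = 1) (hDr : (W F d).comp Dr = 1)
    (A B : Lp2Plus →L[ℂ] Lp2Plus)
    (hA : A = Cr.comp ((W F (fun t => (a (-t))⁻¹)).comp Dr))
    (hB : B = ((1 : Lp2Plus →L[ℂ] Lp2Plus) - H F (fun t => c (-t))).comp A +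
      (H F (fun t => (a t)⁻¹)).comp Dr) :
    (∃ R : Lp2Plus →L[ℂ] Lp2Plus, (W F a + H F b).comp R = 1) ∧
      (W F a + H F b).comp B = 1 := by
  obtain ⟨⟨haM, haNe, haiM⟩, ⟨hbM, hbNe, hbiM⟩, hmatch⟩ := hab
  subst hc hd hB hA
  -- membership facts
  have hraM : MemLp (fun t => a (-t)) ⊤ (volume : Measure ℝ) := aux_memℒp_reflect haM
  have hraiM : MemLp (fun t => (a (-t))⁻¹) ⊤ (volume : Measure ℝ) := aux_memℒp_reflect haiM
  have hrbiM : MemLp (fun t => (b (-t))⁻¹) ⊤ (volume : Measure ℝ) := aux_memℒp_reflect hbiM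
  have hcM : MemLp (fun t => a t * (b t)⁻¹) ⊤ (volume : Measure ℝ) := aux_memℒp_mul haM hbiM
  have hctM : MemLp (fun t => a (-t) * (b (-t))⁻¹) ⊤ (volume : Measure ℝ) :=
    aux_memℒp_mul hraM hrbiM
  -- a.e. identities
  have haeB : (fun t => a t * (a (-t) * (b (-t))⁻¹)) =ᵐ[volume] b := by
    filter_upwards [hmatch, aux_ae_neg hbNe] with t h1 h2
    rw [← mul_assoc, h1, mul_assoc, mul_inv_cancel₀ h2, mul_one]
  have haeA : (fun t => b t * (a t * (b t)⁻¹)) =ᵐ[volume] a := by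
    filter_upwards [hbNe] with t h
    rw [mul_comm (a t) ((b t)⁻¹), ← mul_assoc, mul_inv_cancel₀ h, one_mul]
  have haeD : (fun t => b t * (a (-t))⁻¹) =ᵐ[volume] fun t => a t * (b (-t))⁻¹ := by
    filter_upwards [hmatch, aux_ae_neg haNe, aux_ae_neg hbNe] with t h1 h2 h3
    field_simp
    linear_combination -h1
  have hae1 : (fun t => a t * (a t)⁻¹) =ᵐ[volume] fun _ : ℝ => (1 : ℂ) := by
    filter_upwards [haNe] with t h
    exact mul_inv_cancel₀ h
  -- operator identities
  have E1 : H F b = (W F a).comp (H F (fun t => a (-t) * (b (-t))⁻¹))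
      + (H F a).comp (W F (fun t => a t * (b t)⁻¹)) := by
    have h := aux_key2 F haM hctM
    simp only [neg_neg] at h
    have hmem : MemLp (fun t => a t * (a (-t) * (b (-t))⁻¹)) ⊤ (volume : Measure ℝ) :=
      aux_memℒp_mul haM hctM
    have hcongr : H F (fun t => a t * (a (-t) * (b (-t))⁻¹)) = H F b :=
      aux_H_congr F hmem haeB
    rw [hcongr] at h
    exact h
  have E2 : W F a = (W F b).comp (W F (fun t => a t * (b t)⁻¹))
      + (H F b).comp (H F (fun t => a (-t) * (b (-t))⁻¹)) := by
    have h : W F (fun t => b t * (a t * (b t)⁻¹))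
        = (W F b).comp (W F (fun t => a t * (b t)⁻¹))
          + (H F b).comp (H F (fun t => a (-t) * (b (-t))⁻¹)) := by
      have h0 := aux_key1 F hbM hcM
      exact h0
    have hmem : MemLp (fun t => b t * (a t * (b t)⁻¹)) ⊤ (volume : Measure ℝ) :=
      aux_memℒp_mul hbM hcM
    have hcongr : W F (fun t => b t * (a t * (b t)⁻¹)) = W F a := aux_W_congr F hmem haeA
    rw [hcongr] at h
    exact h
  have E3 : W F (fun t => a t * (b (-t))⁻¹)
      = (W F b).comp (W F (fun t => (a (-t))⁻¹)) + (H F b).comp (H F (fun t => (a t)⁻¹)) := by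
    have h := aux_key1 F hbM hraiM
    simp only [neg_neg] at h
    have hmem : MemLp (fun t => b t * (a (-t))⁻¹) ⊤ (volume : Measure ℝ) :=
      aux_memℒp_mul hbM hraiM
    have hcongr : W F (fun t => b t * (a (-t))⁻¹) = W F (fun t => a t * (b (-t))⁻¹) :=
      aux_W_congr F hmem haeD
    rw [hcongr] at h
    exact h
  have E4 : (0 : Lp2Plus →L[ℂ] Lp2Plus)
      = (W F a).comp (H F (fun t => (a t)⁻¹))
        + (H F a).comp (W F (fun t => (a (-t))⁻¹)) := by
    have h : H F (fun t => a t * (a t)⁻¹)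
        = (W F a).comp (H F (fun t => (a t)⁻¹))
          + (H F a).comp (W F (fun t => (a (-t))⁻¹)) := by
      have h0 := aux_key2 F haM haiM
      exact h0
    have hmem : MemLp (fun t => a t * (a t)⁻¹) ⊤ (volume : Measure ℝ) :=
      aux_memℒp_mul haM haiM
    have hcongr : H F (fun t => a t * (a t)⁻¹) = H F (fun _ : ℝ => (1 : ℂ)) :=
      aux_H_congr F hmem hae1
    rw [hcongr, aux_H_one] at h
    exact h
  have main : (W F a + H F b).comp
      (((1 : Lp2Plus →L[ℂ] Lp2Plus) - H F (fun t => (fun t => a t * (b t)⁻¹) (-t))).comp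
        (Cr.comp ((W F (fun t => (a (-t))⁻¹)).comp Dr))
      + (H F (fun t => (a t)⁻¹)).comp Dr) = 1 := by
    exact aux_ring (W F a) (W F b) (W F (fun t => a t * (b t)⁻¹))
      (W F (fun t => a t * (b (-t))⁻¹)) (H F a) (H F b)
      (H F (fun t => a (-t) * (b (-t))⁻¹)) (H F (fun t => (a t)⁻¹))
      (W F (fun t => (a (-t))⁻¹)) Cr Dr E1 E2 E3 E4 hCr hDr
  exact ⟨⟨_, main⟩, main⟩

end WienerHopf
end
end

section
/- Let (a,b) be a matching pair in L^∞(ℝ) with subordinated pair (c,d), and let M be the operator on L²(ℝ⁺) ⊕ L²(ℝ⁺) given by the 2×2 operator matrix M = [[0, W(d)], [−W(c), W(ã⁻¹)]]. Suppose there exist bounded operators C_r and D_l on L²(ℝ⁺) with W(c)∘C_r = I (W(c) right invertible) and D_l∘W(d) = I (W(d) left invertible). Then M is generalized invertible, and the operator matrix M_g = [[C_r∘W(ã⁻¹)∘D_l, −C_r], [D_l, 0]] is a generalized inverse of M, i.e. M∘M_g∘M = M. -/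
open MeasureTheory Complex Filter Set

noncomputable section

namespace WienerHopf

/-- If `W(c)` is right invertible and `W(d)` is left invertible, then
`M = [[0, W(d)], [-W(c), W(ã⁻¹)]]` is generalized invertible, with generalized inverse
`M_g = [[Cᵣ W(ã⁻¹) Dₗ, -Cᵣ], [Dₗ, 0]]`. -/
theorem matrix_generalized_inverse
    (F : FourierL2) (a b c d : ℝ → ℂ) (hab : MatchingPair a b)
    (hc : c = fun t => a t * (b t)⁻¹) (hd : d = fun t => a t * (b (-t))⁻¹)
    (Cr Dl : Lp2Plus →L[ℂ] Lp2Plus)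
    (hCr : (W F c).comp Cr = 1) (hDl : Dl.comp (W F d) = 1)
    (M Mg : Lp2Plus × Lp2Plus →L[ℂ] Lp2Plus × Lp2Plus)
    (hM : M = (((0 : Lp2Plus →L[ℂ] Lp2Plus).coprod (W F d)).prod
      ((-(W F c)).coprod (W F (fun t => (a (-t))⁻¹)))))
    (hMg : Mg = ((Cr.comp ((W F (fun t => (a (-t))⁻¹)).comp Dl)).coprod (-Cr)).prod
      (Dl.coprod (0 : Lp2Plus →L[ℂ] Lp2Plus))) :
    (∃ N : Lp2Plus × Lp2Plus →L[ℂ] Lp2Plus × Lp2Plus, M.comp (N.comp M) = M) ∧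
      M.comp (Mg.comp M) = M := by
  have hC : ∀ v, W F c (Cr v) = v := fun v =>
    congrFun (congrArg DFunLike.coe hCr) v
  have hD : ∀ v, Dl (W F d v) = v := fun v =>
    congrFun (congrArg DFunLike.coe hDl) v
  have key : M.comp (Mg.comp M) = M := by
    subst hM hMg
    ext ⟨x, y⟩ <;>
      simp [ContinuousLinearMap.comp_apply, ContinuousLinearMap.prod_apply,
        ContinuousLinearMap.coprod_apply, hC, hD, map_add, map_neg]
  exact ⟨⟨Mg, key⟩, key⟩

end WienerHopf
end
end

section
/- Let ν ≥ 0 and let e_ν(t) := e^{iνt}. Then on L²(ℝ⁺): (1) W(e_{−ν}) ∘ W(e_ν) = I, so W(e_ν) is left invertible with left inverse W(e_{−ν}); and (2) I − W(e_ν) ∘ W(e_{−ν}) is the operator of pointwise multiplication by the indicator function of the interval (0, ν); in particular it is an (orthogonal) projection onto the subspace of functions in L²(ℝ⁺) vanishing a.e. outside (0, ν). -/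
open MeasureTheory Complex Filter Set

noncomputable section

namespace WienerHopf

theorem eexp_memℒp (ν : ℝ) :
    MemLp (fun t : ℝ => Complex.exp (Complex.I * ν * t)) ⊤ (volume : Measure ℝ) := by
  refine memLp_top_of_bound (Continuous.aestronglyMeasurable (by fun_prop)) 1
    (Eventually.of_forall fun t => ?_)
  rw [Complex.norm_exp]
  norm_num [Complex.mul_re, Complex.I_re, Complex.I_im]

/-- The translation operator `f ↦ f (· + c)` on `L²(ℝ)`. -/
def transl (c : ℝ) : L2 →L[ℂ] L2 :=
  (Lp.compMeasurePreservingₗᵢ ℂ (fun t : ℝ => t + c)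
    (measurePreserving_add_right volume c)).toContinuousLinearMap

theorem transl_coeFn (c : ℝ) (f : L2) :
    (transl c f : ℝ → ℂ) =ᵐ[volume] fun t => f (t + c) :=
  Lp.coeFn_compMeasurePreserving f (measurePreserving_add_right volume c)

theorem ae_ne (c : ℝ) : ∀ᵐ t : ℝ ∂(volume : Measure ℝ), t ≠ c := by
  rw [ae_iff]
  simp only [not_not, Set.setOf_eq_eq_singleton]
  exact measure_singleton c

theorem W0_eexp (F : FourierL2) (ν : ℝ) :
    W0 F (fun t => Complex.exp (Complex.I * ν * t)) = transl (-ν) := by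
  have hmem := eexp_memℒp ν
  have key : ∀ φ : L2, Integrable (φ : ℝ → ℂ) volume →
      W0 F (fun t => Complex.exp (Complex.I * ν * t)) φ = transl (-ν) φ := by
    intro φ hφ
    have h1 : (transl (-ν) φ : ℝ → ℂ) =ᵐ[volume] fun t => φ (t + -ν) := transl_coeFn _ φ
    have hTint : Integrable (transl (-ν) φ : ℝ → ℂ) volume := by
      have h2 : Integrable ((φ : ℝ → ℂ) ∘ fun t : ℝ => t + -ν) volume :=
        ((measurePreserving_add_right volume (-ν)).integrable_comp
          (Lp.aestronglyMeasurable φ)).mpr hφ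
      exact h2.congr h1.symm
    have hfwdT := F.forward (transl (-ν) φ) hTint
    have hfwd := F.forward φ hφ
    have shift : ∀ ξ : ℝ, (∫ x : ℝ, Complex.exp (Complex.I * ξ * x) * φ (x + -ν))
        = Complex.exp (Complex.I * ν * ξ) * ∫ x : ℝ, Complex.exp (Complex.I * ξ * x) * φ x := by
      intro ξ
      have h := integral_add_right_eq_self (μ := volume)
        (fun x : ℝ => Complex.exp (Complex.I * ξ * x) * φ (x + -ν)) ν
      rw [← h]
      have he : ∀ x : ℝ, Complex.exp (Complex.I * ξ * ↑(x + ν)) * φ (x + ν + -ν)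
          = Complex.exp (Complex.I * ν * ξ) * (Complex.exp (Complex.I * ξ * x) * φ x) := by
        intro x
        rw [show x + ν + -ν = x by ring,
          show (Complex.I * ξ * ↑(x + ν)) = Complex.I * ν * ξ + Complex.I * ξ * x by
            push_cast; ring,
          Complex.exp_add, mul_assoc]
      simp_rw [he]
      rw [integral_const_mul]
    have hEq : F.equiv (transl (-ν) φ)
        = mul (fun t => Complex.exp (Complex.I * ν * t)) (F.equiv φ) := by
      apply Lp.ext
      have h2 := mul_coeFn hmem (F.equiv φ)
      filter_upwards [hfwdT, h2, hfwd] with ξ ha hb hc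
      rw [ha, hb, hc]
      have hint : (∫ x : ℝ, Complex.exp (Complex.I * ξ * x) * (transl (-ν) φ) x)
          = ∫ x : ℝ, Complex.exp (Complex.I * ξ * x) * φ (x + -ν) :=
        integral_congr_ae (h1.mono fun x hx => by dsimp only; rw [hx])
      rw [hint, shift ξ]
    calc W0 F (fun t => Complex.exp (Complex.I * ν * t)) φ
        = F.equiv.symm (mul (fun t => Complex.exp (Complex.I * ν * t)) (F.equiv φ)) := rfl
      _ = F.equiv.symm (F.equiv (transl (-ν) φ)) := by rw [hEq]
      _ = transl (-ν) φ := F.equiv.symm_apply_apply _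
  refine ContinuousLinearMap.ext fun f => ?_
  have hdense := Lp.simpleFunc.denseRange (E := ℂ) (μ := (volume : Measure ℝ)) (p := 2)
    (by norm_num)
  have heq : ⇑(W0 F (fun t => Complex.exp (Complex.I * ν * t))) = ⇑(transl (-ν)) := by
    refine hdense.equalizer (ContinuousLinearMap.continuous _)
      (ContinuousLinearMap.continuous _) (funext fun g => ?_)
    have hg : Integrable ((g : L2) : ℝ → ℂ) volume := by
      have hint : Integrable (Lp.simpleFunc.toSimpleFunc g) volume :=
        (SimpleFunc.memLp_iff_integrable (two_ne_zero) (by norm_num)).mp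
          (Lp.simpleFunc.memLp g)
      exact hint.congr (Lp.simpleFunc.toSimpleFunc_eq_toFun g)
    exact key (g : L2) hg
  exact congrFun heq f


theorem chiPlus_pos {t : ℝ} (ht : 0 < t) : chiPlus t = 1 :=
  Set.indicator_of_mem ht _

theorem chiPlus_nonpos {t : ℝ} (ht : ¬ 0 < t) : chiPlus t = 0 :=
  Set.indicator_of_notMem (by simpa using ht) _

theorem compress_transl_coeFn (c : ℝ) (φ : Lp2Plus) :
    ((compress (transl c) φ : L2) : ℝ → ℂ) =ᵐ[volume]
      fun t => chiPlus t * ((φ : L2) : ℝ → ℂ) (t + c) := by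
  have h1 := mul_coeFn chiPlus_memℒp (transl c (φ : L2))
  have h2 := transl_coeFn c (φ : L2)
  rw [compress_coe]
  filter_upwards [h1, h2] with t ha hb
  rw [ha, hb]

theorem compress_transl_twice (c d : ℝ) (φ : Lp2Plus) :
    ((compress (transl d) (compress (transl c) φ) : L2) : ℝ → ℂ) =ᵐ[volume]
      fun t => chiPlus t * (chiPlus (t + d) * ((φ : L2) : ℝ → ℂ) (t + d + c)) := by
  have h1 := mul_coeFn chiPlus_memℒp (transl d ((compress (transl c) φ : L2)))
  have h2 := transl_coeFn d ((compress (transl c) φ : L2))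
  have h3 := (measurePreserving_add_right volume d).quasiMeasurePreserving.ae_eq_comp
    (compress_transl_coeFn c φ)
  rw [compress_coe]
  filter_upwards [h1, h2, h3] with t ha hb hc
  rw [ha, hb]
  simp only [Function.comp_apply] at hc
  rw [hc]

/-- For `ν ≥ 0`, `W(e_{-ν}) W(e_ν) = I`, and `I - W(e_ν) W(e_{-ν})` is the operator of
multiplication by the indicator of `(0,ν)`; in particular it is an orthogonal
projection onto the subspace of functions vanishing a.e. outside `(0,ν)`. -/
theorem shift_left_inverse_and_projection
    (F : FourierL2) (ν : ℝ) (hν : 0 ≤ ν)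
    (P : Lp2Plus →L[ℂ] Lp2Plus)
    (hP : P = 1 - (W F (fun t => Complex.exp (Complex.I * ν * t))).comp
      (W F (fun t => Complex.exp (Complex.I * (-ν) * t)))) :
    (W F (fun t => Complex.exp (Complex.I * (-ν) * t))).comp
        (W F (fun t => Complex.exp (Complex.I * ν * t))) = 1 ∧
    (∀ φ : Lp2Plus,
      ((P φ : L2) : ℝ → ℂ) =ᵐ[volume]
        (Set.Ioo (0 : ℝ) ν).indicator (((φ : L2) : ℝ → ℂ))) ∧
    P.comp P = P ∧
    (∀ φ ψ : Lp2Plus,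
      @inner ℂ _ _ ((P φ : L2)) ((ψ : L2)) = @inner ℂ _ _ ((φ : L2)) ((P ψ : L2))) ∧
    (∀ φ : Lp2Plus, ∀ᵐ t : ℝ ∂volume, t ∉ Set.Ioo (0 : ℝ) ν → ((P φ : L2) : ℝ → ℂ) t = 0) ∧
    (∀ φ : Lp2Plus, (∀ᵐ t : ℝ ∂volume, t ∉ Set.Ioo (0 : ℝ) ν → ((φ : L2) : ℝ → ℂ) t = 0) →
      P φ = φ) := by
  have hWp : W F (fun t => Complex.exp (Complex.I * ν * t)) = compress (transl (-ν)) := by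
    rw [W, W0_eexp]
  have hWm : W F (fun t => Complex.exp (Complex.I * (-ν) * t)) = compress (transl ν) := by
    have h := W0_eexp F (-ν)
    simp only [Complex.ofReal_neg, neg_neg] at h
    rw [W, h]
  have hone : (W F (fun t => Complex.exp (Complex.I * (-ν) * t))).comp
      (W F (fun t => Complex.exp (Complex.I * ν * t))) = 1 := by
    rw [hWp, hWm]
    refine ContinuousLinearMap.ext fun φ => ?_
    rw [ContinuousLinearMap.comp_apply, ContinuousLinearMap.one_apply]
    apply Subtype.ext
    apply Lp.ext
    have hφ2 : ∀ᵐ t : ℝ ∂volume, t < 0 → ((φ : L2) : ℝ → ℂ) t = 0 := φ.2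
    filter_upwards [compress_transl_twice (-ν) ν φ, hφ2, ae_ne 0] with t h1 h2 h3
    rw [h1, show t + ν + -ν = t by ring]
    rcases lt_or_gt_of_ne h3 with hlt | hgt
    · rw [h2 hlt]
      simp
    · rw [chiPlus_pos hgt, chiPlus_pos (by linarith), one_mul, one_mul]
  have hInd : ∀ φ : Lp2Plus, ((P φ : L2) : ℝ → ℂ) =ᵐ[volume]
      (Set.Ioo (0 : ℝ) ν).indicator (((φ : L2) : ℝ → ℂ)) := by
    intro φ
    have hPφ : (P φ : L2) = (φ : L2) -
        ((compress (transl (-ν))) ((compress (transl ν)) φ) : L2) := by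
      rw [hP, hWp, hWm, ContinuousLinearMap.sub_apply, ContinuousLinearMap.one_apply,
        ContinuousLinearMap.comp_apply, Submodule.coe_sub]
    rw [hPφ]
    have hφ2 : ∀ᵐ t : ℝ ∂volume, t < 0 → ((φ : L2) : ℝ → ℂ) t = 0 := φ.2
    filter_upwards [Lp.coeFn_sub (φ : L2)
        ((compress (transl (-ν)) (compress (transl ν) φ) : L2)),
      compress_transl_twice ν (-ν) φ, hφ2, ae_ne 0, ae_ne ν] with t h0 h1 h2 h3 h4
    rw [h0]
    simp only [Pi.sub_apply]
    rw [h1, show t + -ν + ν = t by ring]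
    rcases lt_or_gt_of_ne h3 with hlt | hgt
    · rw [h2 hlt, Set.indicator_of_notMem (by rw [Set.mem_Ioo]; rintro ⟨h, -⟩; linarith)]
      simp
    · rcases lt_or_gt_of_ne h4 with hlt2 | hgt2
      · rw [Set.indicator_of_mem (Set.mem_Ioo.mpr ⟨hgt, hlt2⟩), chiPlus_pos hgt,
          chiPlus_nonpos (by intro h; linarith)]
        ring
      · rw [Set.indicator_of_notMem (by rw [Set.mem_Ioo]; rintro ⟨-, h⟩; linarith), chiPlus_pos hgt,
          chiPlus_pos (by linarith)]
        ring
  refine ⟨hone, hInd, ?_, ?_, ?_, ?_⟩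
  · refine ContinuousLinearMap.ext fun φ => ?_
    rw [ContinuousLinearMap.comp_apply]
    apply Subtype.ext
    apply Lp.ext
    filter_upwards [hInd (P φ), hInd φ] with t h1 h2
    rw [h1, h2]
    by_cases ht : t ∈ Set.Ioo (0 : ℝ) ν
    · rw [Set.indicator_of_mem ht, Set.indicator_of_mem ht, h2,
        Set.indicator_of_mem ht]
    · rw [Set.indicator_of_notMem ht, Set.indicator_of_notMem ht]
  · intro φ ψ
    rw [MeasureTheory.L2.inner_def, MeasureTheory.L2.inner_def]
    apply integral_congr_ae
    filter_upwards [hInd φ, hInd ψ] with t h1 h2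
    rw [h1, h2]
    simp only [RCLike.inner_apply]
    by_cases ht : t ∈ Set.Ioo (0 : ℝ) ν
    · rw [Set.indicator_of_mem ht, Set.indicator_of_mem ht]
    · rw [Set.indicator_of_notMem ht, Set.indicator_of_notMem ht]
      simp
  · intro φ
    filter_upwards [hInd φ] with t h1 ht
    rw [h1, Set.indicator_of_notMem ht]
  · intro φ hφ
    apply Subtype.ext
    apply Lp.ext
    filter_upwards [hInd φ, hφ] with t h1 h2
    rw [h1]
    by_cases ht : t ∈ Set.Ioo (0 : ℝ) ν
    · rw [Set.indicator_of_mem ht]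
    · rw [Set.indicator_of_notMem ht, h2 ht]


end WienerHopf
end
end
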